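/- arXiv:1810.11402 — 4 statements merged into one kernel-verified Lean document; each statement's English description precedes it below -/
import Mathlib

section
/- Let x : [-τ, T] → ℝ be continuous with x ≡ 0 on [-τ, 0], and suppose there exist constants k₁, k₂ ≥ 0 such that x(t) ≤ k₁ + k₂ ∫₀ᵗ (x(s) + max_{r ∈ [s-τ, s]} x(r)) ds for all t ∈ [0, T]. Then x(t) ≤ k₁ · exp(2 k₂ t) for all t ∈ [0, T]. -/
open MeasureTheory intervalIntegral

private lemma aff_image0 (a b : ℝ) (hab : a ≤ b) :
    (fun u : ℝ => a + u * (b - a)) '' Set.Icc (0:ℝ) 1 = Set.Icc a b := by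
  have h1 : (fun u : ℝ => a + u * (b - a)) = (fun v => a + v) ∘ (fun u => u * (b - a)) := rfl
  rw [h1, Set.image_comp, Set.image_mul_right_Icc (by norm_num) (by linarith : (0:ℝ) ≤ b - a),
    Set.image_const_add_Icc]
  norm_num

private lemma sup_cont0 (y : ℝ → ℝ) (hy : Continuous y) (c : ℝ) (hc : 0 < c) :
    Continuous (fun s : ℝ => sSup (y '' Set.Icc (s - c) s)) := by
  have : (fun s : ℝ => sSup (y '' Set.Icc (s - c) s))
      = fun s : ℝ => sSup ((fun u : ℝ => y ((s - c) + u * (s - (s - c)))) '' Set.Icc (0:ℝ) 1) := by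
    funext s
    rw [show (fun u : ℝ => y ((s - c) + u * (s - (s - c)))) =
        y ∘ (fun u : ℝ => (s - c) + u * (s - (s - c))) from rfl, Set.image_comp,
      aff_image0 _ _ (by linarith)]
  rw [this]
  exact IsCompact.continuous_sSup isCompact_Icc (by fun_prop)

/-- Gronwall-type integral inequality for functions involving a delayed supremum. -/
theorem stmt0 (τ T : ℝ) (hτ : 0 < τ) (hT : 0 < T) (x : ℝ → ℝ)
    (hx : ContinuousOn x (Set.Icc (-τ) T))
    (hx0 : ∀ t ∈ Set.Icc (-τ) (0:ℝ), x t = 0)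
    (k₁ k₂ : ℝ) (hk₁ : 0 ≤ k₁) (hk₂ : 0 ≤ k₂)
    (hineq : ∀ t ∈ Set.Icc (0:ℝ) T,
      x t ≤ k₁ + k₂ * ∫ s in (0:ℝ)..t, (x s + sSup (x '' Set.Icc (s - τ) s))) :
    ∀ t ∈ Set.Icc (0:ℝ) T, x t ≤ k₁ * Real.exp (2 * k₂ * t) := by
  have hτT : (-τ) ≤ T := by linarith
  set y : ℝ → ℝ := Set.IccExtend hτT ((Set.Icc (-τ) T).restrict x) with hy_def
  have hyc : Continuous y := (continuousOn_iff_continuous_restrict.mp hx).Icc_extend'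
  have hyx : ∀ u ∈ Set.Icc (-τ) T, y u = x u := by
    intro u hu
    rw [hy_def, Set.IccExtend_of_mem hτT _ hu]
    rfl
  have hy0 : ∀ u ∈ Set.Icc (-τ) (0:ℝ), y u = 0 := by
    intro u hu
    rw [hyx u ⟨hu.1, hu.2.trans hT.le⟩]; exact hx0 u hu
  -- the running supremum, as a globally continuous function
  set φ : ℝ → ℝ := fun s => sSup ((fun u : ℝ => y (0 + u * (s - 0))) '' Set.Icc (0:ℝ) 1)
    with hφ_def
  have hφc : Continuous φ := IsCompact.continuous_sSup isCompact_Icc (by fun_prop)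
  have hφeq : ∀ s : ℝ, 0 ≤ s → φ s = sSup (y '' Set.Icc 0 s) := by
    intro s hs
    show sSup ((fun u : ℝ => y (0 + u * (s - 0))) '' Set.Icc (0:ℝ) 1) = _
    rw [show (fun u : ℝ => y (0 + u * (s - 0))) = y ∘ (fun u : ℝ => 0 + u * (s - 0)) from rfl,
      Set.image_comp, aff_image0 _ _ hs]
  have hbdd : ∀ s : ℝ, BddAbove (y '' Set.Icc 0 s) := fun s =>
    (isCompact_Icc.image_of_continuousOn hyc.continuousOn).bddAbove
  have hbdd' : ∀ s : ℝ, BddAbove (y '' Set.Icc (s - τ) s) := fun s =>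
    (isCompact_Icc.image_of_continuousOn hyc.continuousOn).bddAbove
  have hy00 : y 0 = 0 := hy0 0 ⟨by linarith, le_refl 0⟩
  have hφnon : ∀ s : ℝ, 0 ≤ s → 0 ≤ φ s := by
    intro s hs
    rw [hφeq s hs]
    exact le_csSup (hbdd s) ⟨0, ⟨le_refl 0, hs⟩, hy00⟩
  have hxφ : ∀ s ∈ Set.Icc (0:ℝ) T, x s ≤ φ s := by
    intro s hs
    rw [hφeq s hs.1, ← hyx s ⟨by linarith [hs.1], hs.2⟩]
    exact le_csSup (hbdd s) ⟨s, ⟨hs.1, le_refl s⟩, rfl⟩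
  have hSy : ∀ s : ℝ, 0 ≤ s → sSup (y '' Set.Icc (s - τ) s) ≤ φ s := by
    intro s hs
    apply Real.sSup_le _ (hφnon s hs)
    rintro v ⟨u, hu, rfl⟩
    rcases le_or_gt u 0 with h | h
    · rw [hy0 u ⟨by linarith [hu.1], h⟩]; exact hφnon s hs
    · rw [hφeq s hs]
      exact le_csSup (hbdd s) ⟨u, ⟨h.le, hu.2⟩, rfl⟩
  have hScont : Continuous (fun s => sSup (y '' Set.Icc (s - τ) s)) := sup_cont0 y hyc τ hτ
  have himg : ∀ s ∈ Set.Icc (0:ℝ) T, x '' Set.Icc (s - τ) s = y '' Set.Icc (s - τ) s := by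
    intro s hs
    exact Set.image_congr fun u hu =>
      (hyx u ⟨by linarith [hs.1, hu.1], hu.2.trans hs.2⟩).symm
  -- main intermediate inequality
  have hFkey : ∀ t ∈ Set.Icc (0:ℝ) T, x t ≤ k₁ + 2 * k₂ * ∫ s in (0:ℝ)..t, φ s := by
    intro t ht
    have hcongr : (∫ s in (0:ℝ)..t, (x s + sSup (x '' Set.Icc (s - τ) s)))
        = ∫ s in (0:ℝ)..t, (y s + sSup (y '' Set.Icc (s - τ) s)) := by
      apply intervalIntegral.integral_congr
      intro s hs
      rw [Set.uIcc_of_le ht.1] at hs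
      have hs' : s ∈ Set.Icc (0:ℝ) T := ⟨hs.1, hs.2.trans ht.2⟩
      show x s + sSup (x '' Set.Icc (s - τ) s) = y s + sSup (y '' Set.Icc (s - τ) s)
      rw [hyx s ⟨by linarith [hs.1], hs'.2⟩, himg s hs']
    have hmono : (∫ s in (0:ℝ)..t, (y s + sSup (y '' Set.Icc (s - τ) s)))
        ≤ ∫ s in (0:ℝ)..t, 2 * φ s := by
      apply intervalIntegral.integral_mono_on ht.1
        ((hyc.add hScont).intervalIntegrable 0 t)
        ((continuous_const.mul hφc).intervalIntegrable 0 t)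
      intro s hs
      have hs' : s ∈ Set.Icc (0:ℝ) T := ⟨hs.1, hs.2.trans ht.2⟩
      have h1 : y s ≤ φ s := by rw [hyx s ⟨by linarith [hs.1], hs'.2⟩]; exact hxφ s hs'
      have h2 := hSy s hs.1
      show y s + sSup (y '' Set.Icc (s - τ) s) ≤ 2 * φ s
      linarith
    have := hineq t ht
    have h2 : (∫ s in (0:ℝ)..t, (x s + sSup (x '' Set.Icc (s - τ) s)))
        ≤ 2 * ∫ s in (0:ℝ)..t, φ s := by
      rw [hcongr]
      calc _ ≤ ∫ s in (0:ℝ)..t, 2 * φ s := hmono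
        _ = 2 * ∫ s in (0:ℝ)..t, φ s := intervalIntegral.integral_const_mul 2 φ
    nlinarith [mul_le_mul_of_nonneg_left h2 hk₂]
  have hInn : ∀ t ∈ Set.Icc (0:ℝ) T, 0 ≤ ∫ s in (0:ℝ)..t, φ s := by
    intro t ht
    exact intervalIntegral.integral_nonneg ht.1 fun u hu => hφnon u hu.1
  have hφineq : ∀ t ∈ Set.Icc (0:ℝ) T, φ t ≤ k₁ + 2 * k₂ * ∫ s in (0:ℝ)..t, φ s := by
    intro t ht
    have hrhs : 0 ≤ k₁ + 2 * k₂ * ∫ s in (0:ℝ)..t, φ s := by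
      have := hInn t ht
      nlinarith
    rw [hφeq t ht.1]
    apply Real.sSup_le _ hrhs
    rintro v ⟨u, hu, rfl⟩
    have hu' : u ∈ Set.Icc (0:ℝ) T := ⟨hu.1, hu.2.trans ht.2⟩
    have h1 : y u ≤ k₁ + 2 * k₂ * ∫ s in (0:ℝ)..u, φ s := by
      rw [hyx u ⟨by linarith [hu.1], hu'.2⟩]; exact hFkey u hu'
    have h2 : (∫ s in (0:ℝ)..u, φ s) ≤ ∫ s in (0:ℝ)..t, φ s := by
      rw [← intervalIntegral.integral_add_adjacent_intervals
        (hφc.intervalIntegrable 0 u) (hφc.intervalIntegrable u t)]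
      have h3 : 0 ≤ ∫ s in u..t, φ s :=
        intervalIntegral.integral_nonneg hu.2 fun v hv => hφnon v (hu.1.trans hv.1)
      linarith
    nlinarith
  -- Gronwall's inequality
  set F : ℝ → ℝ := fun t => ∫ s in (0:ℝ)..t, φ s with hF_def
  have hF' : ∀ t : ℝ, HasDerivAt F (φ t) t := fun t =>
    (hφc.integral_hasStrictDerivAt 0 t).hasDerivAt
  have hgron : ∀ t ∈ Set.Icc (0:ℝ) T, ‖F t‖ ≤ gronwallBound 0 (2 * k₂) k₁ (t - 0) := by
    apply norm_le_gronwallBound_of_norm_deriv_right_le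
      (f := F) (f' := φ)
    · exact fun t _ => (hF' t).continuousAt.continuousWithinAt
    · exact fun t _ => (hF' t).hasDerivWithinAt
    · simp [hF_def, intervalIntegral.integral_same]
    · intro t ht
      have h1 : 0 ≤ φ t := hφnon t ht.1
      have h2 : 0 ≤ F t := hInn t ⟨ht.1, ht.2.le⟩
      have h3 := hφineq t ⟨ht.1, ht.2.le⟩
      rw [Real.norm_eq_abs, Real.norm_eq_abs, abs_of_nonneg h1, abs_of_nonneg h2]
      linarith
  intro t ht
  have h1 := hFkey t ht
  have h2 := hgron t ht
  have h3 : F t ≤ gronwallBound 0 (2 * k₂) k₁ (t - 0) :=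
    (le_abs_self _).trans (by rwa [Real.norm_eq_abs] at h2)
  rcases eq_or_lt_of_le hk₂ with h | h
  · have : x t ≤ k₁ := by rw [← h] at h1; linarith
    have : (1:ℝ) ≤ Real.exp (2 * k₂ * t) := by
      rw [← h]; norm_num
    nlinarith
  · have hK : (2 * k₂ : ℝ) ≠ 0 := by positivity
    rw [gronwallBound_of_K_ne_0 hK] at h3
    simp only [sub_zero, zero_mul, zero_add] at h3
    have h4 : x t ≤ k₁ + 2 * k₂ * (k₁ / (2 * k₂) * (Real.exp (2 * k₂ * t) - 1)) := by
      nlinarith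
    have h5 : k₁ + 2 * k₂ * (k₁ / (2 * k₂) * (Real.exp (2 * k₂ * t) - 1))
        = k₁ * Real.exp (2 * k₂ * t) := by
      field_simp
      ring
    linarith [h5 ▸ h4]
end

section
/- Consider the scalar delay equation x'(t) = (1/10) max_{s ∈ [t-2,t]} (u(t) x(s)) on (0,1) with x = φ on [-2,0], where φ : [-2,0] → ℝ is continuous with φ(0) = 0 and both φ|_{[-2,-1]} and φ|_{[-1,0]} have range [-10,10], and where u : (0,1) → ℝ is measurable with -1 ≤ u ≤ 3. Then any solution x ∈ C([-2,1]) ∩ W^{1,∞}(0,1) satisfies |x(t)| ≤ 30/7 for all t ∈ [0,1], and consequently max_{s ∈ [t-2,t]} (u(t) x(s)) = 10 |u(t)| for a.e. t ∈ (0,1), so x'(t) = |u(t)| a.e. -/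
open MeasureTheory Set

/-- a.e. differentiation of the interval integral of an integrable function on ℝ. -/
theorem ae_hasDerivAt_intervalIntegral (f : ℝ → ℝ) (hf : Integrable f volume) (a : ℝ) :
    ∀ᵐ t : ℝ ∂volume, HasDerivAt (fun y => ∫ r in a..y, f r) (f t) t := by
  filter_upwards [IsUnifLocDoublingMeasure.ae_tendsto_average_norm_sub volume
    hf.locallyIntegrable 1] with t ht
  rw [hasDerivAt_iff_tendsto_slope, tendsto_iff_norm_sub_tendsto_zero]
  have h0 : Filter.Tendsto (fun y : ℝ => |y - t| / 2) (nhds t) (nhds 0) := by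
    have hc : ContinuousAt (fun y : ℝ => |y - t| / 2) t := by fun_prop
    simpa using hc.tendsto
  have hδ : Filter.Tendsto (fun y : ℝ => |y - t| / 2) (nhdsWithin t {t}ᶜ)
      (nhdsWithin 0 (Ioi 0)) := by
    apply tendsto_nhdsWithin_of_tendsto_nhds_of_eventually_within
    · exact h0.mono_left nhdsWithin_le_nhds
    · filter_upwards [self_mem_nhdsWithin] with y (hy : y ≠ t)
      have h1 : y - t ≠ 0 := sub_ne_zero.mpr hy
      have h2 := abs_pos.mpr h1
      exact mem_Ioi.mpr (by positivity)
  have hmem : ∀ᶠ y : ℝ in nhdsWithin t {t}ᶜ,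
      t ∈ Metric.closedBall ((t + y) / 2) (1 * (|y - t| / 2)) := by
    apply Filter.Eventually.of_forall
    intro y
    rw [Metric.mem_closedBall, Real.dist_eq, one_mul]
    rw [show t - (t + y) / 2 = -((y - t) / 2) by ring, abs_neg, abs_div]
    simp
  have hA := ht (fun y : ℝ => (t + y) / 2) (fun y => |y - t| / 2) hδ hmem
  apply squeeze_zero_norm' _ hA
  filter_upwards [self_mem_nhdsWithin] with y (hy : y ≠ t)
  have hyt : y - t ≠ 0 := sub_ne_zero.mpr hy
  have hint1 : IntervalIntegrable f volume a y := hf.intervalIntegrable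
  have hint2 : IntervalIntegrable f volume a t := hf.intervalIntegrable
  have hFF : (∫ r in a..y, f r) - ∫ r in a..t, f r = ∫ r in t..y, f r :=
    intervalIntegral.integral_interval_sub_left hint1 hint2
  have hsub : ∫ r in t..y, (f r - f t) = (∫ r in t..y, f r) - (y - t) * f t := by
    rw [intervalIntegral.integral_sub hf.intervalIntegrable intervalIntegrable_const,
        intervalIntegral.integral_const, smul_eq_mul]
  have hslope : slope (fun y => ∫ r in a..y, f r) t y - f t
      = (y - t)⁻¹ * ∫ r in t..y, (f r - f t) := by
    rw [slope_def_field, hsub, ← hFF]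
    field_simp
  rw [hslope]
  simp only [Real.norm_eq_abs, abs_mul, abs_inv, abs_abs]
  have hball : Metric.closedBall ((t + y) / 2) (|y - t| / 2) = Icc (min t y) (max t y) := by
    rw [Real.closedBall_eq_Icc]
    rcases le_total t y with h | h
    · rw [abs_of_nonneg (by linarith : (0:ℝ) ≤ y - t),
        show (t + y) / 2 - (y - t) / 2 = t by ring, show (t + y) / 2 + (y - t) / 2 = y by ring,
        min_eq_left h, max_eq_right h]
    · rw [abs_of_nonpos (by linarith : y - t ≤ 0),
        show (t + y) / 2 - -(y - t) / 2 = y by ring, show (t + y) / 2 + -(y - t) / 2 = t by ring,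
        min_eq_right h, max_eq_left h]
  rw [setAverage_eq, hball, Real.volume_real_Icc_of_le min_le_max, integral_Icc_eq_integral_Ioc]
  have hvol : max t y - min t y = |y - t| := by
    rcases le_total t y with h | h
    · rw [max_eq_right h, min_eq_left h, abs_of_nonneg (by linarith)]
    · rw [max_eq_left h, min_eq_right h, abs_of_nonpos (by linarith)]; ring
  rw [hvol, smul_eq_mul]
  have hnorm := intervalIntegral.norm_integral_le_integral_norm_uIoc
    (a := t) (b := y) (f := fun r => f r - f t) (μ := volume)
  have huIoc : Set.uIoc t y = Ioc (min t y) (max t y) := rfl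
  rw [huIoc] at hnorm
  simp only [Real.norm_eq_abs] at hnorm ⊢
  exact mul_le_mul_of_nonneg_left hnorm (inv_nonneg.mpr (abs_nonneg _))

/-- For the scalar delay equation `x' = (1/10) max_{s∈[t-2,t]} (u(t) x(s))` with the given
initial history, any solution is bounded by 30/7, the maximum evaluates to `10 |u(t)|`,
and hence `x'(t) = |u(t)|` a.e. -/
theorem stmt13 (φ : ℝ → ℝ) (hφc : ContinuousOn φ (Set.Icc (-2:ℝ) 0)) (hφ0 : φ 0 = 0)
    (hr1 : φ '' Set.Icc (-2:ℝ) (-1) = Set.Icc (-10:ℝ) 10)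
    (hr2 : φ '' Set.Icc (-1:ℝ) 0 = Set.Icc (-10:ℝ) 10)
    (u : ℝ → ℝ) (hu : Measurable u)
    (hub : ∀ᵐ t ∂(volume.restrict (Set.Ioo (0:ℝ) 1)), u t ∈ Set.Icc (-1:ℝ) 3)
    (x : ℝ → ℝ) (hxc : ContinuousOn x (Set.Icc (-2:ℝ) 1))
    (hlip : ∃ C, LipschitzOnWith C x (Set.Icc (0:ℝ) 1))
    (hinit : ∀ t ∈ Set.Icc (-2:ℝ) 0, x t = φ t)
    (heq : ∀ t ∈ Set.Icc (0:ℝ) 1,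
      x t = ∫ r in (0:ℝ)..t, (1/10) * sSup ((fun s => u r * x s) '' Set.Icc (r - 2) r)) :
    (∀ t ∈ Set.Icc (0:ℝ) 1, |x t| ≤ 30/7) ∧
    (∀ᵐ t ∂(volume.restrict (Set.Ioo (0:ℝ) 1)),
      sSup ((fun s => u t * x s) '' Set.Icc (t - 2) t) = 10 * |u t|) ∧
    (∀ᵐ t ∂(volume.restrict (Set.Ioo (0:ℝ) 1)), HasDerivAt x (|u t|) t) := by
  have hx0 : x 0 = 0 := by rw [hinit 0 ⟨by norm_num, le_refl 0⟩, hφ0]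
  -- values of x on the initial interval are bounded by 10
  have hxinit : ∀ s ∈ Icc (-2:ℝ) 0, |x s| ≤ 10 := by
    intro s hs
    rw [hinit s hs]
    rcases le_total s (-1) with h | h
    · have : φ s ∈ Icc (-10:ℝ) 10 := hr1 ▸ mem_image_of_mem φ ⟨hs.1, h⟩
      exact abs_le.mpr ⟨this.1, this.2⟩
    · have : φ s ∈ Icc (-10:ℝ) 10 := hr2 ▸ mem_image_of_mem φ ⟨h, hs.2⟩
      exact abs_le.mpr ⟨this.1, this.2⟩
  have hsubD : ∀ r ∈ Icc (0:ℝ) 1, Icc (r-2) r ⊆ Icc (-2:ℝ) 1 :=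
    fun r hr => Icc_subset_Icc (by linarith [hr.1]) hr.2
  have hne : ∀ r : ℝ, ((fun s => u r * x s) '' Icc (r-2) r).Nonempty :=
    fun r => (nonempty_Icc.mpr (by linarith)).image _
  have hbdd : ∀ r ∈ Icc (0:ℝ) 1, BddAbove ((fun s => u r * x s) '' Icc (r-2) r) := by
    intro r hr
    exact (isCompact_Icc.image_of_continuousOn
      (continuousOn_const.mul (hxc.mono (hsubD r hr)))).bddAbove
  -- lower bound for the sup: 10 * |u r|
  have hSlow : ∀ r ∈ Icc (0:ℝ) 1, 10 * |u r| ≤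
      sSup ((fun s => u r * x s) '' Icc (r-2) r) := by
    intro r hr
    rcases le_total 0 (u r) with h | h
    · obtain ⟨s₀, hs₀, hφs₀⟩ : ∃ s₀ ∈ Icc (-1:ℝ) 0, φ s₀ = 10 := by
        have : (10:ℝ) ∈ φ '' Icc (-1:ℝ) 0 := hr2 ▸ (by norm_num : (10:ℝ) ∈ Icc (-10:ℝ) 10)
        exact this
      have hs₀D : s₀ ∈ Icc (r-2) r := ⟨by linarith [hs₀.1, hr.2], by linarith [hs₀.2, hr.1]⟩
      have hxs₀ : x s₀ = 10 := by
        rw [hinit s₀ ⟨by linarith [hs₀.1], hs₀.2⟩, hφs₀]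
      have hle := le_csSup (hbdd r hr) (mem_image_of_mem _ hs₀D)
      rw [hxs₀] at hle
      rw [abs_of_nonneg h]
      linarith
    · obtain ⟨s₀, hs₀, hφs₀⟩ : ∃ s₀ ∈ Icc (-1:ℝ) 0, φ s₀ = -10 := by
        have : (-10:ℝ) ∈ φ '' Icc (-1:ℝ) 0 := hr2 ▸ (by norm_num : (-10:ℝ) ∈ Icc (-10:ℝ) 10)
        exact this
      have hs₀D : s₀ ∈ Icc (r-2) r := ⟨by linarith [hs₀.1, hr.2], by linarith [hs₀.2, hr.1]⟩
      have hxs₀ : x s₀ = -10 := by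
        rw [hinit s₀ ⟨by linarith [hs₀.1], hs₀.2⟩, hφs₀]
      have hle := le_csSup (hbdd r hr) (mem_image_of_mem _ hs₀D)
      rw [hxs₀] at hle
      rw [abs_of_nonpos h]
      linarith
  -- conditional upper bound for the sup
  have hSup_le : ∀ r ∈ Icc (0:ℝ) 1, (∀ s ∈ Icc (0:ℝ) r, |x s| ≤ 10) →
      sSup ((fun s => u r * x s) '' Icc (r-2) r) ≤ 10 * |u r| := by
    intro r hr hb
    apply csSup_le (hne r)
    rintro y ⟨s, hs, rfl⟩
    have hxs : |x s| ≤ 10 := by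
      rcases le_total s 0 with h | h
      · exact hxinit s ⟨by linarith [hs.1, hr.1], h⟩
      · exact hb s ⟨h, hs.2⟩
    calc u r * x s ≤ |u r * x s| := le_abs_self _
      _ = |u r| * |x s| := abs_mul _ _
      _ ≤ |u r| * 10 := mul_le_mul_of_nonneg_left hxs (abs_nonneg _)
      _ = 10 * |u r| := by ring
  -- a.e. bound on u as a plain volume statement
  have hub' : ∀ᵐ r : ℝ ∂volume, r ∈ Ioo (0:ℝ) 1 → u r ∈ Icc (-1:ℝ) 3 :=
    (ae_restrict_iff' measurableSet_Ioo).mp hub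
  -- the solution never reaches 10 in absolute value on [0,1]
  have h10 : ∀ t ∈ Icc (0:ℝ) 1, |x t| < 10 := by
    by_contra hcon
    push_neg at hcon
    obtain ⟨t₁, ht₁, ht₁10⟩ := hcon
    set K := Icc (0:ℝ) 1 ∩ (fun t => |x t|) ⁻¹' Ici 10 with hK
    have hKne : K.Nonempty := ⟨t₁, ht₁, ht₁10⟩
    have hKclosed : IsClosed K :=
      ContinuousOn.preimage_isClosed_of_isClosed
        ((hxc.mono (Icc_subset_Icc (by norm_num) le_rfl)).abs) isClosed_Icc isClosed_Ici
    have hKbdd : BddBelow K := ⟨0, fun t ht => ht.1.1⟩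
    set t₀ := sInf K with ht₀
    have ht₀K : t₀ ∈ K := hKclosed.csInf_mem hKne hKbdd
    have ht₀I : t₀ ∈ Icc (0:ℝ) 1 := ht₀K.1
    have ht₀10 : (10:ℝ) ≤ |x t₀| := ht₀K.2
    have ht₀pos : 0 < t₀ := by
      rcases (lt_or_eq_of_le ht₀I.1).symm with h | h
      · exfalso; rw [← h] at ht₀10; rw [hx0] at ht₀10; norm_num at ht₀10
      · exact h
    have hlt : ∀ s, 0 ≤ s → s < t₀ → |x s| < 10 := by
      intro s hs0 hst
      by_contra hge
      push_neg at hge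
      have : s ∈ K := ⟨⟨hs0, by linarith [ht₀I.2]⟩, hge⟩
      exact absurd (csInf_le hKbdd this) (not_le.mpr hst)
    -- bound the integral
    have hbound : |x t₀| ≤ 3 * |t₀ - 0| := by
      rw [heq t₀ ht₀I]
      rw [← Real.norm_eq_abs]
      apply intervalIntegral.norm_integral_le_of_norm_le_const_ae
      have hane1 : ∀ᵐ r : ℝ ∂volume, r ≠ (1:ℝ) := by simp [ae_iff]
      have hane2 : ∀ᵐ r : ℝ ∂volume, r ≠ t₀ := by simp [ae_iff]
      filter_upwards [hub', hane1, hane2] with r hu1 hr1' hrt₀ hr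
      rw [uIoc_of_le ht₀pos.le] at hr
      have hr1 : r ∈ Icc (0:ℝ) 1 := ⟨hr.1.le, hr.2.trans ht₀I.2⟩
      have hub3 : u r ∈ Icc (-1:ℝ) 3 :=
        hu1 ⟨hr.1, lt_of_le_of_ne (hr.2.trans ht₀I.2) hr1'⟩
      have hua : |u r| ≤ 3 := abs_le.mpr ⟨by linarith [hub3.1], hub3.2⟩
      have hrlt : r < t₀ := lt_of_le_of_ne hr.2 hrt₀
      have hS_le : sSup ((fun s => u r * x s) '' Icc (r-2) r) ≤ 10 * |u r| :=
        hSup_le r hr1 (fun s hs => (hlt s hs.1 (lt_of_le_of_lt hs.2 hrlt)).le)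
      have hS_ge : 0 ≤ sSup ((fun s => u r * x s) '' Icc (r-2) r) :=
        le_trans (by positivity) (hSlow r hr1)
      rw [Real.norm_eq_abs]
      rw [abs_of_nonneg (by positivity)]
      calc (1:ℝ)/10 * sSup ((fun s => u r * x s) '' Icc (r-2) r)
          ≤ 1/10 * (10 * |u r|) := by linarith
        _ ≤ 1/10 * (10 * 3) := by linarith
        _ = 3 := by norm_num
    rw [sub_zero, abs_of_nonneg ht₀pos.le] at hbound
    linarith [ht₀I.2]
  -- hence the sup is exactly 10 |u r| everywhere on [0,1]
  have hSeq : ∀ r ∈ Icc (0:ℝ) 1,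
      sSup ((fun s => u r * x s) '' Icc (r-2) r) = 10 * |u r| := fun r hr =>
    le_antisymm (hSup_le r hr (fun s hs => (h10 s ⟨hs.1, hs.2.trans hr.2⟩).le)) (hSlow r hr)
  -- the integral equation simplifies
  have hxint : ∀ t ∈ Icc (0:ℝ) 1, x t = ∫ r in (0:ℝ)..t, |u r| := by
    intro t ht
    rw [heq t ht]
    apply intervalIntegral.integral_congr
    intro r hr
    rw [uIcc_of_le ht.1] at hr
    show (1:ℝ)/10 * sSup ((fun s => u r * x s) '' Icc (r-2) r) = |u r|
    rw [hSeq r ⟨hr.1, hr.2.trans ht.2⟩]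
    ring
  -- conclusion 1
  have hconc1 : ∀ t ∈ Icc (0:ℝ) 1, |x t| ≤ 30/7 := by
    intro t ht
    have habs : ‖∫ r in (0:ℝ)..t, |u r|‖ ≤ 3 * |t - 0| := by
      apply intervalIntegral.norm_integral_le_of_norm_le_const_ae
      have hane1 : ∀ᵐ r : ℝ ∂volume, r ≠ (1:ℝ) := by simp [ae_iff]
      filter_upwards [hub', hane1] with r hu1 hr1' hr
      rw [uIoc_of_le ht.1] at hr
      have hub3 : u r ∈ Icc (-1:ℝ) 3 :=
        hu1 ⟨hr.1, lt_of_le_of_ne (hr.2.trans ht.2) hr1'⟩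
      rw [Real.norm_eq_abs, abs_abs]
      exact abs_le.mpr ⟨by linarith [hub3.1], hub3.2⟩
    rw [Real.norm_eq_abs, sub_zero, abs_of_nonneg ht.1] at habs
    rw [hxint t ht, ← Real.norm_eq_abs, Real.norm_eq_abs]
    rw [← Real.norm_eq_abs]
    calc ‖∫ r in (0:ℝ)..t, |u r|‖ ≤ 3 * t := by rw [Real.norm_eq_abs]; exact habs
      _ ≤ 3 := by linarith [ht.2]
      _ ≤ 30/7 := by norm_num
  refine ⟨hconc1, ?_, ?_⟩
  · rw [ae_restrict_iff' measurableSet_Ioo]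
    exact Filter.Eventually.of_forall fun t ht => hSeq t ⟨ht.1.le, ht.2.le⟩
  · -- conclusion 3
    set f0 : ℝ → ℝ := (Ioo (0:ℝ) 1).indicator (fun r => |u r|) with hf0
    have hf0i : Integrable f0 volume := by
      rw [hf0, integrable_indicator_iff measurableSet_Ioo]
      apply Measure.integrableOn_of_bounded (M := 3)
      · rw [Real.volume_Ioo]; exact ENNReal.ofReal_ne_top
      · exact (hu.abs.aestronglyMeasurable)
      · filter_upwards [hub] with r hr
        rw [Real.norm_eq_abs, abs_abs]
        exact abs_le.mpr ⟨by linarith [hr.1], hr.2⟩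
    have hF0 := ae_hasDerivAt_intervalIntegral f0 hf0i 0
    rw [ae_restrict_iff' measurableSet_Ioo]
    filter_upwards [hF0] with t hF0t ht
    -- x agrees with the f0-integral in a neighbourhood of t
    have hxF0 : ∀ s ∈ Ioo (0:ℝ) 1, x s = ∫ r in (0:ℝ)..s, f0 r := by
      intro s hs
      rw [hxint s ⟨hs.1.le, hs.2.le⟩]
      apply intervalIntegral.integral_congr_ae
      have hane1 : ∀ᵐ r : ℝ ∂volume, r ≠ (1:ℝ) := by simp [ae_iff]
      filter_upwards [hane1] with r hr1 hr
      rw [uIoc_of_le hs.1.le] at hr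
      have hmem : r ∈ Ioo (0:ℝ) 1 := ⟨hr.1, lt_of_le_of_ne (hr.2.trans hs.2.le) hr1⟩
      rw [hf0, indicator_of_mem hmem]
    have hfeq : x =ᶠ[nhds t] fun y => ∫ r in (0:ℝ)..y, f0 r := by
      filter_upwards [Ioo_mem_nhds ht.1 ht.2] with s hs using hxF0 s hs
    have := hF0t.congr_of_eventuallyEq hfeq
    rwa [hf0, indicator_of_mem ht] at this
end

section
/- Let u : (0,1) → ℝ be measurable with -1 ≤ u(t) ≤ 3 a.e., set a := ∫_{{u<0}} u dt and b := ∫_{{u>0}} u dt, and let x(t) := ∫₀ᵗ |u(s)| ds. If ∫₀¹ |x(t) - 2t|² dt + ∫₀¹ u(t) dt + 4|x(1) - 2| ≤ 1, then a contradiction follows; i.e., the value ∫₀¹ |x(t) - 2t|² dt + ∫₀¹ u dt + 4|x(1)-2| is strictly greater than 1 for every such u. -/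
open MeasureTheory Set Metric Filter

/-- Key step for non-existence of optimal controls: the objective value is strictly
greater than 1 for every admissible control. -/
theorem stmt14 (u : ℝ → ℝ) (hu : Measurable u)
    (hub : ∀ᵐ t ∂(volume.restrict (Set.Ioo (0:ℝ) 1)), u t ∈ Set.Icc (-1:ℝ) 3) :
    1 < (∫ t in (0:ℝ)..1, |(∫ s in (0:ℝ)..t, |u s|) - 2 * t| ^ 2) +
      (∫ t in (0:ℝ)..1, u t) + 4 * |(∫ s in (0:ℝ)..1, |u s|) - 2| := by
  -- transfer the a.e. bound to `Icc 0 1`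
  have hub'' : ∀ᵐ t ∂(volume.restrict (Set.Icc (0:ℝ) 1)), u t ∈ Set.Icc (-1:ℝ) 3 := by
    rwa [← Measure.restrict_congr_set Ioo_ae_eq_Icc]
  have hub' : ∀ᵐ t ∂(volume.restrict (Set.Ioc (0:ℝ) 1)), u t ∈ Set.Icc (-1:ℝ) 3 := by
    rwa [← Measure.restrict_congr_set Ioo_ae_eq_Ioc]
  -- integrability
  have h_int : IntegrableOn (fun s => |u s|) (Set.Icc (0:ℝ) 1) volume := by
    refine Integrable.mono' (integrable_const 3) (hu.abs.aestronglyMeasurable) ?_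
    filter_upwards [hub''] with t ht
    rw [Real.norm_eq_abs, abs_abs]
    exact abs_le.mpr ⟨by linarith [ht.1], ht.2⟩
  have h_intu : IntegrableOn u (Set.Icc (0:ℝ) 1) volume := by
    refine Integrable.mono' (integrable_const 3) hu.aestronglyMeasurable ?_
    filter_upwards [hub''] with t ht
    rw [Real.norm_eq_abs]
    exact abs_le.mpr ⟨by linarith [ht.1], ht.2⟩
  have hiv : IntervalIntegrable (fun s => |u s|) volume 0 1 :=
    (by rwa [uIcc_of_le zero_le_one] :
      IntegrableOn (fun s => |u s|) (uIcc (0:ℝ) 1) volume).intervalIntegrable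
  have hivu : IntervalIntegrable u volume 0 1 :=
    (by rwa [uIcc_of_le zero_le_one] :
      IntegrableOn u (uIcc (0:ℝ) 1) volume).intervalIntegrable
  set x : ℝ → ℝ := fun t => ∫ s in (0:ℝ)..t, |u s| with hxdef
  set X1 : ℝ := x 1 with hX1def
  set Q : ℝ := ∫ t in (0:ℝ)..1, |x t - 2 * t| ^ 2 with hQdef
  set I : ℝ := ∫ t in (0:ℝ)..1, u t with hIdef
  -- pointwise inequality `2|u| - 3 ≤ u` a.e. on `Ioc 0 1`
  have hIu : 2 * X1 - 3 ≤ I := by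
    have hmono : ∫ t in Set.Ioc (0:ℝ) 1, (2 * |u t| - 3) ≤ ∫ t in Set.Ioc (0:ℝ) 1, u t := by
      refine integral_mono_ae ?_ (h_intu.mono_set Ioc_subset_Icc_self) ?_
      · exact ((h_int.mono_set Ioc_subset_Icc_self).const_mul 2).sub
          (integrableOn_const (by simp))
      · filter_upwards [hub'] with t ht
        rcases abs_cases (u t) with ⟨h1, _⟩ | ⟨h1, _⟩ <;> rw [h1] <;>
          [linarith [ht.2]; linarith [ht.1]]
    have hsplit : ∫ t in Set.Ioc (0:ℝ) 1, (2 * |u t| - 3) = 2 * X1 - 3 := by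
      rw [← intervalIntegral.integral_of_le zero_le_one,
        intervalIntegral.integral_sub
          (hiv.const_mul 2)
          intervalIntegrable_const,
        intervalIntegral.integral_const_mul, intervalIntegral.integral_const]
      simp [hX1def, hxdef]
    rw [← hsplit, hIdef, intervalIntegral.integral_of_le zero_le_one]
    exact hmono
  -- suppose the objective is ≤ 1
  by_contra hJ
  push_neg at hJ
  have hJ' : Q + I + 4 * |X1 - 2| ≤ 1 := by
    simpa [hQdef, hIdef, hX1def, hxdef] using hJ
  have hQnn : 0 ≤ Q := by
    rw [hQdef]
    exact intervalIntegral.integral_nonneg zero_le_one (fun t _ => by positivity)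
  have hd : X1 = 2 ∧ Q = 0 := by
    rcases abs_cases (X1 - 2) with ⟨h1, h2⟩ | ⟨h1, h2⟩ <;> rw [h1] at hJ' <;>
      constructor <;> linarith
  have hI1 : I ≤ 1 := by
    have := hJ'
    rw [hd.1] at this
    simpa [hd.2] using this
  -- from Q = 0, the primitive equals 2t on [0,1]
  have hxcont : ContinuousOn x (Set.Icc (0:ℝ) 1) := by
    have := intervalIntegral.continuousOn_primitive_interval
      (μ := volume) (a := (0:ℝ)) (b := 1) (f := fun s => |u s|)
      (by rwa [uIcc_of_le zero_le_one])
    rwa [uIcc_of_le zero_le_one] at this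
  have hwcont : ContinuousOn (fun t => x t - 2 * t) (Set.Icc (0:ℝ) 1) :=
    hxcont.sub ((continuous_const.mul continuous_id).continuousOn)
  have hw0 : ∀ t ∈ Set.Icc (0:ℝ) 1, x t = 2 * t := by
    have hsqint : IntegrableOn (fun t => |x t - 2 * t| ^ 2) (Set.Ioc (0:ℝ) 1) volume :=
      ((hwcont.abs.pow 2).integrableOn_Icc).mono_set Ioc_subset_Icc_self
    have hQ0 : ∫ t in Set.Ioc (0:ℝ) 1, |x t - 2 * t| ^ 2 = 0 := by
      rw [← intervalIntegral.integral_of_le zero_le_one]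
      exact hd.2 ▸ hQdef.symm
    have hae : (fun t => x t - 2 * t) =ᵐ[volume.restrict (Set.Ioc (0:ℝ) 1)] 0 := by
      have := (integral_eq_zero_iff_of_nonneg_ae
        (Filter.Eventually.of_forall (fun t => by positivity)) hsqint).mp hQ0
      filter_upwards [this] with t ht
      have : |x t - 2 * t| ^ 2 = 0 := ht
      simpa [abs_eq_zero] using pow_eq_zero_iff (n := 2) (by norm_num) |>.mp this
    have hae' : (fun t => x t - 2 * t) =ᵐ[volume.restrict (Set.Icc (0:ℝ) 1)] 0 := by
      rwa [← Measure.restrict_congr_set Ioc_ae_eq_Icc]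
    have hEq : Set.EqOn (fun t => x t - 2 * t) 0 (Set.Icc (0:ℝ) 1) := by
      refine Measure.eqOn_of_ae_eq hae' hwcont continuousOn_const ?_
      rw [interior_Icc, closure_Ioo (by norm_num : (0:ℝ) ≠ 1)]
    intro t ht
    have := hEq ht
    simp only [Pi.zero_apply] at this
    linarith
  -- Lebesgue differentiation: |u| = 2 a.e. on (0,1]
  set v : ℝ → ℝ := (Set.Ioc (0:ℝ) 1).indicator (fun t => |u t| - 2) with hvdef
  have hvon : IntegrableOn (fun t => |u t| - 2) (Set.Ioc (0:ℝ) 1) volume :=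
    (h_int.mono_set Ioc_subset_Icc_self).sub (integrableOn_const (by simp))
  have hvint : Integrable v volume := hvon.integrable_indicator measurableSet_Ioc
  have hLeb := IsUnifLocDoublingMeasure.ae_tendsto_average (μ := volume)
    hvint.locallyIntegrable 1
  have huabs : ∀ᵐ s ∂(volume.restrict (Set.Ioc (0:ℝ) 1)), |u s| = 2 := by
    have hIoo : ∀ᵐ s ∂(volume.restrict (Set.Ioc (0:ℝ) 1)), s ∈ Set.Ioo (0:ℝ) 1 := by
      rw [← Measure.restrict_congr_set Ioo_ae_eq_Ioc]
      exact ae_restrict_mem measurableSet_Ioo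
    filter_upwards [ae_restrict_of_ae hLeb, hIoo] with s hs hsmem
    have htend : Filter.Tendsto (fun r => ⨍ y in closedBall s r, v y)
        (nhdsWithin 0 (Set.Ioi 0)) (nhds (v s)) := by
      refine hs (fun _ => s) id tendsto_id ?_
      filter_upwards [self_mem_nhdsWithin] with r hr
      exact mem_closedBall_self (by rw [one_mul]; exact le_of_lt hr)
    have hconst : (fun r => ⨍ y in closedBall s r, v y)
        =ᶠ[nhdsWithin (0:ℝ) (Set.Ioi 0)] (fun _ => 0) := by
      have hm : (0:ℝ) < min s (1 - s) := lt_min hsmem.1 (by linarith [hsmem.2])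
      filter_upwards [Ioo_mem_nhdsGT hm] with r hr
      have hr0 : 0 < r := hr.1
      have hrs : r < s := lt_of_lt_of_le hr.2 (min_le_left _ _)
      have hrs' : r < 1 - s := lt_of_lt_of_le hr.2 (min_le_right _ _)
      have hsub : Set.Icc (s - r) (s + r) ⊆ Set.Ioc (0:ℝ) 1 := fun y hy =>
        ⟨by linarith [hy.1], by linarith [hy.2]⟩
      have hint0 : ∫ y in closedBall s r, v y = 0 := by
        rw [Real.closedBall_eq_Icc, integral_Icc_eq_integral_Ioc,
          ← intervalIntegral.integral_of_le (by linarith : s - r ≤ s + r)]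
        have hcongr : Set.EqOn v (fun y => |u y| - 2) (Set.uIcc (s - r) (s + r)) := by
          intro y hy
          rw [uIcc_of_le (by linarith : s - r ≤ s + r)] at hy
          exact Set.indicator_of_mem (hsub hy) _
        rw [intervalIntegral.integral_congr hcongr]
        have hiv2 : IntervalIntegrable (fun s => |u s|) volume (s - r) (s + r) := by
          refine (h_int.mono_set ?_).intervalIntegrable
          rw [uIcc_of_le (by linarith : s - r ≤ s + r)]
          exact fun y hy => ⟨by linarith [hy.1], by linarith [hy.2]⟩
        rw [intervalIntegral.integral_sub hiv2 intervalIntegrable_const,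
          intervalIntegral.integral_const]
        have hx1 : x (s + r) = 2 * (s + r) := hw0 _ ⟨by linarith, by linarith⟩
        have hx2 : x (s - r) = 2 * (s - r) := hw0 _ ⟨by linarith, by linarith⟩
        have hdiff : ∫ y in (s - r)..(s + r), |u y| = x (s + r) - x (s - r) := by
          rw [hxdef]
          have h01 : IntervalIntegrable (fun s => |u s|) volume 0 (s + r) := by
            refine (h_int.mono_set ?_).intervalIntegrable
            rw [uIcc_of_le (by linarith : (0:ℝ) ≤ s + r)]
            exact fun y hy => ⟨hy.1, by linarith [hy.2]⟩
          have h02 : IntervalIntegrable (fun s => |u s|) volume 0 (s - r) := by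
            refine (h_int.mono_set ?_).intervalIntegrable
            rw [uIcc_of_le (by linarith : (0:ℝ) ≤ s - r)]
            exact fun y hy => ⟨hy.1, by linarith [hy.2]⟩
          rw [← intervalIntegral.integral_interval_sub_left h01 h02]
        rw [hdiff, hx1, hx2]
        simp
        ring
      rw [setAverage_eq, hint0, smul_zero]
    have : v s = 0 := tendsto_nhds_unique (htend.congr' hconst) tendsto_const_nhds
    have hv : v s = |u s| - 2 := Set.indicator_of_mem (Set.Ioo_subset_Ioc_self hsmem) _
    rw [hv] at this
    linarith
  -- hence u = 2 a.e. on (0,1], so ∫ u = 2, contradicting I ≤ 1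
  have hu2 : ∀ᵐ s ∂(volume.restrict (Set.Ioc (0:ℝ) 1)), u s = 2 := by
    filter_upwards [huabs, hub'] with s h1 h2
    rcases abs_cases (u s) with ⟨h3, _⟩ | ⟨h3, _⟩
    · linarith [h1 ▸ h3.symm]
    · exfalso
      have : u s = -2 := by rw [h3] at h1; linarith
      linarith [h2.1]
  have hI2 : I = 2 := by
    rw [hIdef, intervalIntegral.integral_of_le zero_le_one]
    rw [integral_congr_ae (hu2.mono (fun s h => h))]
    simp
  linarith
end

section
/- Let (Ω, μ) be a finite measure space with μ(Ω) > 0 and k > 0. For u ∈ L^∞(Ω), the functional LIE_k(u) = (1/k) log(∫_Ω exp(k u) dμ) is Fréchet differentiable with derivative LIE_k'(u) v = ∫_Ω exp(k u) v dμ / ∫_Ω exp(k u) dμ for v ∈ L^∞(Ω), and ‖LIE_k'(u)‖_{(L^∞)*} = 1 for every u. -/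
open MeasureTheory
open scoped ENNReal NNReal

lemma aux_ae_le {Ω : Type*} [MeasurableSpace Ω] {μ : Measure Ω} (f : Lp ℝ ⊤ μ) :
    ∀ᵐ x ∂μ, |f x| ≤ ‖f‖ := by
  have hne : eLpNormEssSup (f : Ω → ℝ) μ ≠ ⊤ := by
    rw [← eLpNorm_exponent_top]; exact Lp.eLpNorm_ne_top f
  filter_upwards [ae_le_eLpNormEssSup (f := (f : Ω → ℝ)) (μ := μ)] with x hx
  have h1 : ((‖f x‖₊ : ℝ≥0∞)).toReal ≤ (eLpNormEssSup (f : Ω → ℝ) μ).toReal :=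
    ENNReal.toReal_mono hne hx
  simpa [Lp.norm_def, eLpNorm_exponent_top, Real.norm_eq_abs] using h1

lemma aux_integrable {Ω : Type*} [MeasurableSpace Ω] {μ : Measure Ω} [IsFiniteMeasure μ]
    {f : Ω → ℝ} (hm : AEStronglyMeasurable f μ) {C : ℝ} (hC : ∀ᵐ x ∂μ, ‖f x‖ ≤ C) :
    Integrable f μ :=
  Integrable.mono' (integrable_const C) hm hC

lemma aux_exp_meas {Ω : Type*} [MeasurableSpace Ω] {μ : Measure Ω} (k : ℝ) (w : Lp ℝ ⊤ μ) :
    AEStronglyMeasurable (fun x => Real.exp (k * w x)) μ :=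
  Real.continuous_exp.comp_aestronglyMeasurable ((Lp.aestronglyMeasurable w).const_mul k)

-- integrability of exp(k w)
lemma aux_int_exp {Ω : Type*} [MeasurableSpace Ω] {μ : Measure Ω} [IsFiniteMeasure μ]
    {k : ℝ} (hk : 0 < k) (w : Lp ℝ ⊤ μ) :
    Integrable (fun x => Real.exp (k * w x)) μ := by
  refine aux_integrable (aux_exp_meas k w) (C := Real.exp (k * ‖w‖)) ?_
  filter_upwards [aux_ae_le w] with x hx
  rw [Real.norm_eq_abs, abs_of_pos (Real.exp_pos _)]
  exact Real.exp_le_exp.2 (by nlinarith [abs_le.1 hx])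

lemma aux_int_exp_pos {Ω : Type*} [MeasurableSpace Ω] {μ : Measure Ω} [IsFiniteMeasure μ]
    (hμ : 0 < (μ Set.univ).toReal) {k : ℝ} (hk : 0 < k) (w : Lp ℝ ⊤ μ) :
    0 < ∫ x, Real.exp (k * w x) ∂μ := by
  have hle : ∫ x, Real.exp (-(k * ‖w‖)) ∂μ ≤ ∫ x, Real.exp (k * w x) ∂μ := by
    refine integral_mono_ae (integrable_const _) (aux_int_exp hk w) ?_
    filter_upwards [aux_ae_le w] with x hx
    exact Real.exp_le_exp.2 (by nlinarith [abs_le.1 hx])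
  have : (0:ℝ) < ∫ _x, Real.exp (-(k * ‖w‖)) ∂μ := by
    rw [integral_const, smul_eq_mul]
    positivity
  linarith

-- scalar estimate
lemma aux_scalar {I A R k : ℝ} (hk : 0 < k) (hI : 0 < I) (hpos : 0 < I + k * A + R)
    (hs : |k * A + R| ≤ I / 2) :
    |(1 / k) * Real.log (I + k * A + R) - (1 / k) * Real.log I - A / I| ≤
      (2 * (k * A + R) ^ 2 / I ^ 2 + |R| / I) / k := by
  set s : ℝ := (k * A + R) / I with hs_def
  have h1s : 1 + s = (I + k * A + R) / I := by
    rw [hs_def]; field_simp; ring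
  have habs : |s| ≤ 1 / 2 := by
    rw [hs_def, abs_div, abs_of_pos hI, div_le_iff₀ hI]
    linarith [hs]
  have hlog : Real.log (I + k * A + R) - Real.log I = Real.log (1 + s) := by
    rw [h1s, Real.log_div hpos.ne' hI.ne']
  have hkey : |Real.log (1 + s) - s| ≤ 2 * s ^ 2 := by
    have h := Real.abs_log_sub_add_sum_range_le (x := -s) (by rw [abs_neg]; linarith) 1
    simp only [Finset.sum_range_one, pow_one, Nat.cast_one, zero_add, Nat.cast_zero, pow_zero] at h
    norm_num at h
    have h3 : s ^ 2 / (1 - |s|) ≤ 2 * s ^ 2 := by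
      rw [div_le_iff₀ (by linarith [abs_nonneg s])]
      nlinarith [sq_abs s, sq_nonneg s, abs_nonneg s]
    rw [show Real.log (1 + s) - s = -s + Real.log (1 + s) by ring]
    exact h.trans h3
  have hmain : (1 / k) * Real.log (I + k * A + R) - (1 / k) * Real.log I - A / I
      = (1 / k) * (Real.log (1 + s) - s) + R / (k * I) := by
    have : (1/k) * s - A / I = R / (k * I) := by
      rw [hs_def]; field_simp; ring
    rw [show (1/k) * Real.log (I + k*A+R) - (1/k)*Real.log I = (1/k)*(Real.log (I+k*A+R) - Real.log I) by ring,
      hlog]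
    linarith [this]
  rw [hmain]
  have t1 : |(1 / k) * (Real.log (1 + s) - s)| ≤ (1/k) * (2 * s^2) := by
    rw [abs_mul, abs_of_pos (by positivity : (0:ℝ) < 1/k)]
    exact mul_le_mul_of_nonneg_left hkey (by positivity)
  have t2 : |R / (k * I)| = |R| / (k * I) := by
    rw [abs_div, abs_of_pos (by positivity : (0:ℝ) < k * I)]
  have hb : |(1 / k) * (Real.log (1 + s) - s) + R / (k * I)| ≤
      (1/k) * (2 * s^2) + |R| / (k * I) := by
    refine (abs_add_le _ _).trans ?_
    rw [t2]
    linarith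
  refine hb.trans (le_of_eq ?_)
  rw [hs_def]
  field_simp

set_option maxHeartbeats 2000000 in
/-- Fréchet differentiability of LogIntExp on L∞ with the stated derivative,
whose dual norm equals 1. -/
theorem stmt18 {Ω : Type*} [MeasurableSpace Ω] (μ : Measure Ω) [IsFiniteMeasure μ]
    (hμ : 0 < (μ Set.univ).toReal) (k : ℝ) (hk : 0 < k) (u : Lp ℝ ⊤ μ) :
    ∃ D : Lp ℝ ⊤ μ →L[ℝ] ℝ,
      (∀ v : Lp ℝ ⊤ μ,
        D v = (∫ x, Real.exp (k * u x) * v x ∂μ) / ∫ x, Real.exp (k * u x) ∂μ) ∧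
      HasFDerivAt (fun w : Lp ℝ ⊤ μ => (1 / k) * Real.log (∫ x, Real.exp (k * w x) ∂μ)) D u ∧
      ‖D‖ = 1 := by
  classical
  haveI : NeZero μ := ⟨fun h0 => by rw [h0] at hμ; simp at hμ⟩
  have hgmeas : AEStronglyMeasurable (fun x => Real.exp (k * u x)) μ := aux_exp_meas k u
  set M : ℝ := Real.exp (k * ‖u‖) with hM_def
  have hM : 0 < M := Real.exp_pos _
  have hgM : ∀ᵐ x ∂μ, ‖Real.exp (k * u x)‖ ≤ M := by
    filter_upwards [aux_ae_le u] with x hx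
    rw [Real.norm_eq_abs, abs_of_pos (Real.exp_pos _)]
    exact Real.exp_le_exp.2 (by nlinarith [abs_le.1 hx])
  have hg_int : Integrable (fun x => Real.exp (k * u x)) μ := aux_int_exp hk u
  set I : ℝ := ∫ x, Real.exp (k * u x) ∂μ with hI_def
  have hI : 0 < I := aux_int_exp_pos hμ hk u
  set V : ℝ := (μ Set.univ).toReal with hV_def
  have hV : 0 < V := hμ
  -- integrability of exp(k u) * v
  have hint : ∀ v : Lp ℝ ⊤ μ, Integrable (fun x => Real.exp (k * u x) * v x) μ := by
    intro v
    refine aux_integrable (hgmeas.mul (Lp.aestronglyMeasurable v)) (C := M * ‖v‖) ?_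
    filter_upwards [hgM, aux_ae_le v] with x hx hv
    rw [norm_mul]
    exact mul_le_mul hx (by rwa [Real.norm_eq_abs]) (norm_nonneg _) hM.le
  -- bound on the pairing
  have hbound : ∀ v : Lp ℝ ⊤ μ, |∫ x, Real.exp (k * u x) * v x ∂μ| ≤ ‖v‖ * I := by
    intro v
    rw [← Real.norm_eq_abs]
    refine (norm_integral_le_of_norm_le (hg_int.mul_const ‖v‖) ?_).trans ?_
    · filter_upwards [hgM, aux_ae_le v] with x hx hv
      rw [norm_mul]
      have h1 : ‖(v : Ω → ℝ) x‖ ≤ ‖v‖ := by rwa [Real.norm_eq_abs]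
      have h2 : ‖Real.exp (k * u x)‖ = Real.exp (k * u x) := by
        rw [Real.norm_eq_abs, abs_of_pos (Real.exp_pos _)]
      rw [h2]
      exact mul_le_mul_of_nonneg_left h1 (Real.exp_pos _).le
    · rw [integral_mul_const]
      rw [mul_comm]
  -- the linear functional
  set T : Lp ℝ ⊤ μ →ₗ[ℝ] ℝ :=
    { toFun := fun v => (∫ x, Real.exp (k * u x) * v x ∂μ) / I
      map_add' := by
        intro v w
        have h1 : (fun x => Real.exp (k * u x) * (v + w) x)
            =ᵐ[μ] fun x => Real.exp (k * u x) * v x + Real.exp (k * u x) * w x := by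
          filter_upwards [Lp.coeFn_add v w] with x hx
          rw [hx, Pi.add_apply]; ring
        rw [integral_congr_ae h1, integral_add (hint v) (hint w), add_div]
      map_smul' := by
        intro c v
        have h1 : (fun x => Real.exp (k * u x) * (c • v) x)
            =ᵐ[μ] fun x => c * (Real.exp (k * u x) * v x) := by
          filter_upwards [Lp.coeFn_smul c v] with x hx
          rw [hx, Pi.smul_apply, smul_eq_mul]; ring
        rw [integral_congr_ae h1, integral_const_mul]
        simp [mul_div_assoc] } with hT_def
  have hTnorm : ∀ v : Lp ℝ ⊤ μ, ‖T v‖ ≤ 1 * ‖v‖ := by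
    intro v
    rw [one_mul]
    show ‖(∫ x, Real.exp (k * u x) * v x ∂μ) / I‖ ≤ ‖v‖
    rw [Real.norm_eq_abs, abs_div, abs_of_pos hI, div_le_iff₀ hI]
    exact hbound v
  set D : Lp ℝ ⊤ μ →L[ℝ] ℝ := T.mkContinuous 1 hTnorm with hD_def
  have hDapp : ∀ v : Lp ℝ ⊤ μ, D v = (∫ x, Real.exp (k * u x) * v x ∂μ) / I := fun v => rfl
  refine ⟨D, hDapp, ?_, ?_⟩
  · -- HasFDerivAt
    have hμ2 : 0 < (μ Set.univ).toReal := by rw [← hV_def]; exact hV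
    rw [hasFDerivAt_iff_isLittleO_nhds_zero]
    set K : ℝ := (8 * (k * M * V) ^ 2 / I ^ 2 + M * V * k ^ 2 / I) / k with hK_def
    have hK : 0 ≤ K := by positivity
    set δ : ℝ := min (1 / k) (I / (4 * k * M * V)) with hδ_def
    have hδ : 0 < δ := lt_min (by positivity) (by positivity)
    have key : ∀ h : Lp ℝ ⊤ μ, ‖h‖ ≤ δ →
        ‖(1 / k) * Real.log (∫ x, Real.exp (k * (u + h) x) ∂μ)
          - (1 / k) * Real.log I - D h‖ ≤ K * ‖h‖ ^ 2 := by
      intro h hδh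
      have hh1 : k * ‖h‖ ≤ 1 := by
        have h1 := le_trans hδh (min_le_left _ _)
        have := (le_div_iff₀ hk).mp h1
        linarith [this, mul_comm (‖h‖) k]
      have hh2 : ‖h‖ ≤ I / (4 * k * M * V) := le_trans hδh (min_le_right _ _)
      set A : ℝ := ∫ x, Real.exp (k * u x) * h x ∂μ with hA_def
      set R : ℝ := ∫ x, Real.exp (k * u x) * (Real.exp (k * h x) - 1 - k * h x) ∂μ
        with hR_def
      -- bound on A
      have hA_bd : |A| ≤ M * V * ‖h‖ := by
        have hb : ∀ᵐ x ∂μ, ‖Real.exp (k * u x) * h x‖ ≤ M * ‖h‖ := by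
          filter_upwards [hgM, aux_ae_le h] with x hx hv
          rw [norm_mul]
          exact mul_le_mul hx (by rwa [Real.norm_eq_abs]) (norm_nonneg _) hM.le
        have h1 := norm_integral_le_of_norm_le_const (μ := μ) hb
        rw [hA_def, ← Real.norm_eq_abs]
        refine h1.trans (le_of_eq ?_)
        rw [hV_def, ← measureReal_def]; ring
      -- a.e. bound for the remainder integrand
      have hRb : ∀ᵐ x ∂μ, ‖Real.exp (k * u x) * (Real.exp (k * h x) - 1 - k * h x)‖
          ≤ M * (k ^ 2 * ‖h‖ ^ 2) := by
        filter_upwards [hgM, aux_ae_le h] with x hx hv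
        have ht : |k * h x| ≤ 1 := by
          rw [abs_mul, abs_of_pos hk]
          nlinarith [abs_nonneg ((h : Ω → ℝ) x)]
        have he := Real.abs_exp_sub_one_sub_id_le ht
        have hsq : ((h : Ω → ℝ) x) ^ 2 ≤ ‖h‖ ^ 2 :=
          sq_le_sq' (by linarith [(abs_le.1 hv).1]) (abs_le.1 hv).2
        have he2 : |Real.exp (k * h x) - 1 - k * h x| ≤ k ^ 2 * ‖h‖ ^ 2 := by
          refine he.trans ?_
          nlinarith
        rw [norm_mul]
        exact mul_le_mul hx (by rwa [Real.norm_eq_abs]) (norm_nonneg _) hM.le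
      have hR_int : Integrable
          (fun x => Real.exp (k * u x) * (Real.exp (k * h x) - 1 - k * h x)) μ :=
        aux_integrable (hgmeas.mul (((aux_exp_meas k h).sub aestronglyMeasurable_const).sub
          ((Lp.aestronglyMeasurable h).const_mul k))) hRb
      have hR_bd : |R| ≤ M * V * (k ^ 2 * ‖h‖ ^ 2) := by
        have h1 := norm_integral_le_of_norm_le_const (μ := μ) hRb
        rw [hR_def, ← Real.norm_eq_abs]
        refine h1.trans (le_of_eq ?_)
        rw [hV_def, ← measureReal_def]; ring
      -- decomposition
      have hdecomp : ∫ x, Real.exp (k * (u + h) x) ∂μ = I + k * A + R := by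
        have hcong : (fun x => Real.exp (k * (u + h) x)) =ᵐ[μ]
            fun x => Real.exp (k * u x) + k * (Real.exp (k * u x) * h x)
              + Real.exp (k * u x) * (Real.exp (k * h x) - 1 - k * h x) := by
          filter_upwards [Lp.coeFn_add u h] with x hx
          rw [hx, Pi.add_apply, mul_add, Real.exp_add]
          ring
        have hi2 : Integrable (fun x => k * (Real.exp (k * u x) * h x)) μ :=
          (hint h).const_mul k
        have hi12 : Integrable
            (fun x => Real.exp (k * u x) + k * (Real.exp (k * u x) * h x)) μ :=
          hg_int.add hi2
        rw [integral_congr_ae hcong, integral_add hi12 hR_int, integral_add hg_int hi2,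
          integral_const_mul, ← hI_def, ← hA_def, ← hR_def]
      have hpos' : 0 < I + k * A + R := by
        rw [← hdecomp]; exact aux_int_exp_pos hμ2 hk (u + h)
      have hAR : |k * A + R| ≤ 2 * k * M * V * ‖h‖ := by
        have h1 := (abs_add_le (k * A) R)
        rw [abs_mul, abs_of_pos hk] at h1
        have h2 : k ^ 2 * ‖h‖ ^ 2 ≤ k * ‖h‖ := by
          have hkh : 0 ≤ k * ‖h‖ := mul_nonneg hk.le (norm_nonneg h)
          nlinarith [hh1, hkh]
        linarith [h1, mul_le_mul_of_nonneg_left hA_bd hk.le, hR_bd,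
          mul_le_mul_of_nonneg_left h2 (mul_nonneg hM.le hV.le)]
      have hs : |k * A + R| ≤ I / 2 := by
        refine hAR.trans ?_
        have : 2 * k * M * V * ‖h‖ ≤ 2 * k * M * V * (I / (4 * k * M * V)) := by
          gcongr
        refine this.trans (le_of_eq ?_)
        field_simp
        ring
      have hcalc := aux_scalar hk hI hpos' hs
      rw [hdecomp, hDapp h, ← hA_def, Real.norm_eq_abs]
      refine hcalc.trans ?_
      have hsq : (k * A + R) ^ 2 ≤ (2 * k * M * V * ‖h‖) ^ 2 :=
        sq_le_sq' (by linarith [(abs_le.1 hAR).1]) (abs_le.1 hAR).2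
      have step : (2 * (k * A + R) ^ 2 / I ^ 2 + |R| / I) / k
          ≤ (2 * (2 * k * M * V * ‖h‖) ^ 2 / I ^ 2 + M * V * (k ^ 2 * ‖h‖ ^ 2) / I) / k := by
        gcongr
      refine step.trans (le_of_eq ?_)
      rw [hK_def]
      field_simp
      ring
    rw [Asymptotics.isLittleO_iff]
    intro c hc
    rw [Metric.eventually_nhds_iff]
    refine ⟨min δ (c / (K + 1)), lt_min hδ (by positivity), fun {y} hy => ?_⟩
    rw [dist_zero_right] at hy
    have h1 := key y (le_trans hy.le (min_le_left _ _))
    have h2 : ‖y‖ ≤ c / (K + 1) := le_trans hy.le (min_le_right _ _)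
    have e2 : K * ‖y‖ ≤ K * (c / (K + 1)) := mul_le_mul_of_nonneg_left h2 hK
    have e3 : K * (c / (K + 1)) ≤ c := by
      rw [mul_div_assoc']
      rw [div_le_iff₀ (by positivity : (0:ℝ) < K + 1)]
      nlinarith
    have e4 : K * ‖y‖ ^ 2 ≤ c * ‖y‖ := by
      have := mul_le_mul_of_nonneg_right (e2.trans e3) (norm_nonneg y)
      nlinarith [this]
    show ‖(1 / k) * Real.log (∫ x, Real.exp (k * (u + y) x) ∂μ)
        - (1 / k) * Real.log (∫ x, Real.exp (k * u x) ∂μ) - D y‖ ≤ c * ‖y‖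
    rw [← hI_def]
    exact h1.trans e4
  · -- norm = 1
    have hDle : ‖D‖ ≤ 1 := LinearMap.mkContinuous_norm_le _ zero_le_one _
    have hone : D (Lp.const ⊤ μ (1 : ℝ)) = 1 := by
      rw [hDapp]
      have h1 : (fun x => Real.exp (k * u x) * (Lp.const ⊤ μ (1 : ℝ)) x)
          =ᵐ[μ] fun x => Real.exp (k * u x) := by
        filter_upwards [Lp.coeFn_const (p := ⊤) μ (1 : ℝ)] with x hx
        rw [hx]; simp
      rw [integral_congr_ae h1, ← hI_def, div_self hI.ne']
    have hnc : ‖Lp.const ⊤ μ (1 : ℝ)‖ = 1 := by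
      have h := Lp.norm_const (p := (⊤ : ℝ≥0∞)) (μ := μ) (c := (1 : ℝ)) (by simp)
      simpa using h
    have hge : 1 ≤ ‖D‖ := by
      have h := D.le_opNorm (Lp.const ⊤ μ (1 : ℝ))
      rw [hone, hnc, mul_one] at h
      simpa using h
    linarith
end
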